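/- For any two density matrices ρ₁ and ρ₂ on ℂ^d, 1 − √F(ρ₁, ρ₂) ≤ (1/2)·‖ρ₁ − ρ₂‖₁ ≤ √(1 − F(ρ₁, ρ₂)). (Fuchs–van de Graaf inequalities relating fidelity and trace distance.) -/

import Mathlib

open Matrix BigOperators Kronecker
open scoped ComplexOrder

noncomputable section
open Classical

/-- The positive semidefinite square root of a matrix (junk value `0` if not PSD). -/
def msqrt {d : Type*} [Fintype d] [DecidableEq d] (A : Matrix d d ℂ) : Matrix d d ℂ :=
  if h : A.PosSemidef then
    (h.1.eigenvectorUnitary : Matrix d d ℂ) *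
      diagonal (((↑) : ℝ → ℂ) ∘ Real.sqrt ∘ h.1.eigenvalues) *
      (star h.1.eigenvectorUnitary : Matrix d d ℂ)
  else 0

/-- The trace norm `Tr √(AᴴA)` of a complex matrix. -/
def traceNorm {d : Type*} [Fintype d] [DecidableEq d] (A : Matrix d d ℂ) : ℝ :=
  ((msqrt (Aᴴ * A)).trace).re

/-- `ρ` is a density matrix: positive semidefinite with trace `1`. -/
def IsDensityMatrix {d : Type*} [Fintype d] [DecidableEq d] (ρ : Matrix d d ℂ) : Prop :=
  ρ.PosSemidef ∧ ρ.trace = 1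

/-- Von Neumann entropy, base 2 (junk value `0` if not Hermitian). -/
def vnEntropy {d : Type*} [Fintype d] [DecidableEq d] (ρ : Matrix d d ℂ) : ℝ :=
  if h : ρ.IsHermitian then -∑ i, (h.eigenvalues i) * Real.logb 2 (h.eigenvalues i) else 0

/-- The binary entropy function, base 2. -/
def binEntropy (p : ℝ) : ℝ := -p * Real.logb 2 p - (1 - p) * Real.logb 2 (1 - p)

/-- Fidelity of two matrices: `(Tr √(√ρ₁ ρ₂ √ρ₁))²`. -/
def fidelity {d : Type*} [Fintype d] [DecidableEq d] (ρ₁ ρ₂ : Matrix d d ℂ) : ℝ :=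
  (((msqrt (msqrt ρ₁ * ρ₂ * msqrt ρ₁)).trace).re) ^ 2

/-- Partial trace over the second tensor factor. -/
def ptraceSnd {m k : ℕ} (ρ : Matrix (Fin m × Fin k) (Fin m × Fin k) ℂ) :
    Matrix (Fin m) (Fin m) ℂ :=
  Matrix.of fun i j => ∑ l : Fin k, ρ (i, l) (j, l)

end


noncomputable section FuchsAux
open Classical

set_option linter.unusedSectionVars false
set_option maxHeartbeats 1000000

variable {n : Type*} [Fintype n] [DecidableEq n] {m : Type*} [Fintype m] [DecidableEq m]

open scoped MatrixOrder in
lemma msqrt_of_psd {A : Matrix n n ℂ} (h : A.PosSemidef) : msqrt A = CFC.sqrt A := by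
  rw [msqrt, dif_pos h, CFC.sqrt_eq_cfc, cfc_nnreal_eq_real _ A h.nonneg, h.1.cfc_eq]
  simp only [IsHermitian.cfc, Unitary.conjStarAlgAut_apply]
  congr 3
  funext i
  simp [Real.coe_sqrt, Real.coe_toNNReal', max_eq_left (h.eigenvalues_nonneg i)]

open scoped MatrixOrder in
lemma msqrt_posSemidef {A : Matrix n n ℂ} (h : A.PosSemidef) : (msqrt A).PosSemidef := by
  rw [msqrt_of_psd h]; exact (CFC.sqrt_nonneg A).posSemidef

open scoped MatrixOrder in
lemma msqrt_mul_self {A : Matrix n n ℂ} (h : A.PosSemidef) : msqrt A * msqrt A = A := by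
  rw [msqrt_of_psd h]; exact CFC.sqrt_mul_sqrt_self A h.nonneg

open scoped MatrixOrder in
lemma msqrt_eq_of_sq_eq {A B : Matrix n n ℂ} (hB : B.PosSemidef) (h : A.PosSemidef)
    (hAB : B * B = A) : msqrt A = B := by
  rw [msqrt_of_psd h, ← hAB]
  exact CFC.sqrt_mul_self B hB.nonneg

/-- Euclidean norm of a complex vector, via dot products. -/
def cnorm (x : n → ℂ) : ℝ := Real.sqrt ((star x ⬝ᵥ x).re)

lemma star_dot_self_re_nonneg (x : n → ℂ) : 0 ≤ (star x ⬝ᵥ x).re := by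
  simp only [dotProduct, Pi.star_apply, Complex.re_sum]
  refine Finset.sum_nonneg fun i _ => ?_
  have : star (x i) * x i = Complex.normSq (x i) := by
    simpa using (Complex.normSq_eq_conj_mul_self (z := x i)).symm
  rw [this]
  simp [Complex.normSq_nonneg]

lemma cnorm_eq_euclidean (x : n → ℂ) :
    cnorm x = ‖(EuclideanSpace.equiv n ℂ).symm x‖ := by
  rw [cnorm, EuclideanSpace.norm_eq]
  congr 1
  simp only [dotProduct, Pi.star_apply, Complex.re_sum]
  refine Finset.sum_congr rfl fun i _ => ?_
  have : star (x i) * x i = Complex.normSq (x i) := by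
    simpa using (Complex.normSq_eq_conj_mul_self (z := x i)).symm
  rw [this]
  simp [Complex.sq_norm, ← Complex.normSq_eq_norm_sq]

lemma abs_dot_le_cnorm (x y : n → ℂ) : ‖star x ⬝ᵥ y‖ ≤ cnorm x * cnorm y := by
  have h := norm_inner_le_norm (𝕜 := ℂ) ((EuclideanSpace.equiv n ℂ).symm x)
    ((EuclideanSpace.equiv n ℂ).symm y)
  rw [cnorm_eq_euclidean, cnorm_eq_euclidean]
  have : (inner ℂ ((EuclideanSpace.equiv n ℂ).symm x) ((EuclideanSpace.equiv n ℂ).symm y) : ℂ)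
      = star x ⬝ᵥ y := by
    simp only [PiLp.inner_apply, dotProduct, RCLike.inner_apply, Pi.star_apply]
    exact Finset.sum_congr rfl fun i _ => mul_comm _ _
  rw [this] at h
  simpa using h

lemma dot_star_mulVec (X : Matrix n n ℂ) (x y : n → ℂ) :
    star (X *ᵥ x) ⬝ᵥ (X *ᵥ y) = star x ⬝ᵥ ((Xᴴ * X) *ᵥ y) := by
  rw [star_mulVec, ← dotProduct_mulVec, ← Matrix.mulVec_mulVec]

lemma dot_mulVec_unitary {W : Matrix n n ℂ} (hW : W ∈ Matrix.unitaryGroup n ℂ)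
    (x : n → ℂ) : star (W *ᵥ x) ⬝ᵥ (W *ᵥ x) = star x ⬝ᵥ x := by
  rw [dot_star_mulVec]
  have : Wᴴ * W = 1 := by
    simpa [star_eq_conjTranspose] using Matrix.mem_unitaryGroup_iff'.mp hW
  rw [this, Matrix.one_mulVec]

lemma cnorm_mulVec_unitary {W : Matrix n n ℂ} (hW : W ∈ Matrix.unitaryGroup n ℂ)
    (x : n → ℂ) : cnorm (W *ᵥ x) = cnorm x := by
  rw [cnorm, cnorm, dot_mulVec_unitary hW]

lemma cnorm_smul (c : ℂ) (x : n → ℂ) : cnorm (c • x) = ‖c‖ * cnorm x := by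
  rw [cnorm, cnorm]
  have : star (c • x) ⬝ᵥ (c • x) = (star c * c) • (star x ⬝ᵥ x) := by
    simp [star_smul, smul_dotProduct, dotProduct_smul, smul_smul, mul_comm, mul_assoc, mul_left_comm]
  rw [this]
  have hcc : star c * c = (‖c‖ ^ 2 : ℝ) := by
    rw [Complex.star_def]
    simpa [Complex.sq_norm] using (Complex.normSq_eq_conj_mul_self (z := c)).symm
  rw [hcc]
  simp only [smul_eq_mul]
  rw [Complex.re_ofReal_mul, Real.sqrt_mul (by positivity), Real.sqrt_sq (by positivity)]

lemma conj_entry_eq (V M : Matrix n n ℂ) (i : n) :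
    (Vᴴ * M * V) i i = star (fun j => V j i) ⬝ᵥ (M *ᵥ fun j => V j i) := by
  simp only [Matrix.mul_apply, dotProduct, Matrix.mulVec, Matrix.conjTranspose_apply,
    Pi.star_apply, dotProduct, Finset.sum_mul, Finset.mul_sum]
  rw [Finset.sum_comm]
  refine Finset.sum_congr rfl fun a _ => Finset.sum_congr rfl fun b _ => by ring

/-- Key lemma: `Re Tr (W * X) ≤ ‖X‖₁` for unitary `W`. -/
theorem re_trace_mul_le_traceNorm (X W : Matrix n n ℂ) (hW : W ∈ Matrix.unitaryGroup n ℂ) :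
    ((W * X).trace).re ≤ traceNorm X := by
  have hX : (Xᴴ * X).PosSemidef := Matrix.posSemidef_conjTranspose_mul_self X
  set P : Matrix n n ℂ := msqrt (Xᴴ * X) with hPdef
  have hP : P.PosSemidef := msqrt_posSemidef hX
  have hPsq : P * P = Xᴴ * X := msqrt_mul_self hX
  have hH : P.IsHermitian := hP.1
  set V : Matrix n n ℂ := (Matrix.IsHermitian.eigenvectorUnitary hH : Matrix n n ℂ) with hVdef
  have hVU : V ∈ Matrix.unitaryGroup n ℂ := (Matrix.IsHermitian.eigenvectorUnitary hH).2
  set s : n → ℝ := hH.eigenvalues with hsdef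
  have hs : ∀ i, 0 ≤ s i := hP.eigenvalues_nonneg
  have hspec : P = V * Matrix.diagonal (RCLike.ofReal ∘ s) * Vᴴ := by
    simpa [hVdef, star_eq_conjTranspose] using hH.spectral_theorem
  have hVsV : Vᴴ * V = 1 := by
    simpa [star_eq_conjTranspose] using Matrix.mem_unitaryGroup_iff'.mp hVU
  have hVVs : V * Vᴴ = 1 := by
    simpa [star_eq_conjTranspose] using Matrix.mem_unitaryGroup_iff.mp hVU
  -- trace of P is the sum of eigenvalues
  have htraceP : P.trace = ∑ i, (s i : ℂ) := by
    rw [hspec, Matrix.trace_mul_cycle, hVsV, Matrix.one_mul, Matrix.trace_diagonal]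
    rfl
  -- trace of W*X via conjugation
  have htr : (W * X).trace = ∑ i, (Vᴴ * (W * X) * V) i i := by
    have : (Vᴴ * (W * X) * V).trace = (W * X).trace := by
      rw [Matrix.trace_mul_cycle, hVVs, Matrix.one_mul]
    rw [← this]
    simp [Matrix.trace, Matrix.diag]
  -- each column of V is an eigenvector of P
  have hcol : ∀ i, P *ᵥ (fun j => V j i) = (s i : ℂ) • (fun j => V j i) := by
    intro i
    have hPV : P * V = V * Matrix.diagonal (RCLike.ofReal ∘ s) := by
      rw [hspec, Matrix.mul_assoc, hVsV, Matrix.mul_one]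
    funext j
    have h1 : (P * V) j i = (P *ᵥ fun k => V k i) j := by
      simp [Matrix.mul_apply, Matrix.mulVec, dotProduct]
    have h2 : (V * Matrix.diagonal (RCLike.ofReal ∘ s) : Matrix n n ℂ) j i
        = (s i : ℂ) * V j i := by
      simp [Matrix.mul_apply, Matrix.diagonal_apply, Finset.sum_ite_eq, mul_comm]
    rw [← h1, hPV, h2]; rfl
  have hcnormcol : ∀ i, cnorm (fun j => V j i) = 1 := by
    intro i
    have : star (fun j => V j i) ⬝ᵥ (fun j => V j i) = (Vᴴ * V) i i := by
      simp [Matrix.mul_apply, dotProduct, Matrix.conjTranspose_apply]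
    rw [cnorm, this, hVsV]
    simp
  -- bound each diagonal entry
  have hbound : ∀ i, |((Vᴴ * (W * X) * V) i i).re| ≤ s i := by
    intro i
    set c : n → ℂ := fun j => V j i with hc
    have h1 : ‖((Vᴴ * (W * X) * V) i i)‖ ≤ cnorm c * cnorm ((W * X) *ᵥ c) := by
      rw [conj_entry_eq]
      exact abs_dot_le_cnorm _ _
    have h2 : cnorm ((W * X) *ᵥ c) = cnorm (X *ᵥ c) := by
      rw [← Matrix.mulVec_mulVec]
      exact cnorm_mulVec_unitary hW _
    have h3 : cnorm (X *ᵥ c) = cnorm (P *ᵥ c) := by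
      rw [cnorm, cnorm, dot_star_mulVec, dot_star_mulVec, hH.eq, hPsq]
    have h4 : cnorm (P *ᵥ c) = s i := by
      rw [hcol i, cnorm_smul, hcnormcol i]
      simp [Complex.norm_real, abs_of_nonneg (hs i)]
    calc |((Vᴴ * (W * X) * V) i i).re| ≤ ‖((Vᴴ * (W * X) * V) i i)‖ :=
          Complex.abs_re_le_norm _
      _ ≤ cnorm c * cnorm ((W * X) *ᵥ c) := h1
      _ = s i := by rw [h2, h3, h4, hcnormcol i, one_mul]
  have : traceNorm X = ∑ i, s i := by
    rw [traceNorm, ← hPdef, htraceP]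
    simp [Complex.re_sum]
  rw [this, htr]
  rw [Complex.re_sum]
  calc ∑ i, ((Vᴴ * (W * X) * V) i i).re ≤ ∑ i, |((Vᴴ * (W * X) * V) i i).re| :=
        Finset.sum_le_sum fun i _ => le_abs_self _
    _ ≤ ∑ i, s i := Finset.sum_le_sum fun i _ => hbound i

/-- trace of `N * diagonal σ`. -/
lemma trace_mul_diagonal' (N : Matrix n n ℂ) (σ : n → ℂ) :
    (N * Matrix.diagonal σ).trace = ∑ i, σ i * N i i := by
  simp [Matrix.trace, Matrix.diag, Matrix.mul_apply, Matrix.diagonal_apply,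
    Finset.sum_ite_eq, mul_comm]

lemma diagonal_sign_unitary (σ : n → ℂ) (hσ : ∀ i, star (σ i) * σ i = 1) :
    Matrix.diagonal σ ∈ Matrix.unitaryGroup n ℂ := by
  rw [Matrix.mem_unitaryGroup_iff']
  have : star (Matrix.diagonal σ) = Matrix.diagonal (star σ) := by
    simp [star_eq_conjTranspose, Matrix.diagonal_conjTranspose]
  rw [this, Matrix.diagonal_mul_diagonal]
  simp only [Pi.star_apply] at *
  rw [show (fun i => star (σ i) * σ i) = fun _ => (1:ℂ) from funext hσ]
  exact Matrix.diagonal_one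


/-- conjugation multiplication: `(V D Vᴴ)(V E Vᴴ) = V (D E) Vᴴ` when `VᴴV = 1`. -/
lemma conj_mul_conj {V D E : Matrix n n ℂ} (hVsV : Vᴴ * V = 1) :
    (V * D * Vᴴ) * (V * E * Vᴴ) = V * (D * E) * Vᴴ := by
  simp only [Matrix.mul_assoc]
  rw [← Matrix.mul_assoc Vᴴ V (E * Vᴴ), hVsV, Matrix.one_mul]

section herm
variable {K : Matrix n n ℂ} (hK : K.IsHermitian)

/-- trace norm of a Hermitian matrix is the sum of the absolute values of eigenvalues. -/
lemma traceNorm_hermitian : traceNorm K = ∑ i, |hK.eigenvalues i| := by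
  set V : Matrix n n ℂ := (Matrix.IsHermitian.eigenvectorUnitary hK : Matrix n n ℂ) with hV
  set μ : n → ℝ := hK.eigenvalues
  have hVsV : Vᴴ * V = 1 := by
    simpa [star_eq_conjTranspose] using
      Matrix.mem_unitaryGroup_iff'.mp (Matrix.IsHermitian.eigenvectorUnitary hK).2
  have hspec : K = V * Matrix.diagonal (RCLike.ofReal ∘ μ) * Vᴴ := by
    simpa [hV, star_eq_conjTranspose] using hK.spectral_theorem
  set Q : Matrix n n ℂ := V * Matrix.diagonal (fun i => ((|μ i| : ℝ) : ℂ)) * Vᴴ with hQ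
  have hQpsd : Q.PosSemidef := by
    apply Matrix.PosSemidef.mul_mul_conjTranspose_same
    refine Matrix.posSemidef_diagonal_iff.mpr fun i => ?_
    rw [RCLike.nonneg_iff]
    constructor
    · simp [abs_nonneg]
    · simp
  have hQsq : Q * Q = Kᴴ * K := by
    rw [hK.eq]
    conv_rhs => rw [hspec]
    rw [hQ, conj_mul_conj hVsV, conj_mul_conj hVsV, Matrix.diagonal_mul_diagonal,
      Matrix.diagonal_mul_diagonal]
    have : (fun i => ((|μ i| : ℝ) : ℂ) * ((|μ i| : ℝ) : ℂ))
        = fun i => (RCLike.ofReal ∘ μ) i * (RCLike.ofReal ∘ μ) i := by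
      funext i
      simp only [Function.comp_apply]
      norm_cast
      rw [abs_mul_abs_self]
      rfl
    rw [this]
  have : msqrt (Kᴴ * K) = Q := msqrt_eq_of_sq_eq hQpsd
    (Matrix.posSemidef_conjTranspose_mul_self K) hQsq
  rw [traceNorm, this, hQ, Matrix.trace_mul_cycle, hVsV, Matrix.one_mul, Matrix.trace_diagonal]
  simp [Complex.re_sum]

/-- there is a unitary `W` with `Re Tr (W * K) = ∑ |μ i|`. -/
lemma exists_unitary_abs_trace :
    ∃ W ∈ Matrix.unitaryGroup n ℂ, ((W * K).trace).re = ∑ i, |hK.eigenvalues i| := by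
  set V : Matrix n n ℂ := (Matrix.IsHermitian.eigenvectorUnitary hK : Matrix n n ℂ) with hV
  set μ : n → ℝ := hK.eigenvalues
  have hVU : V ∈ Matrix.unitaryGroup n ℂ := (Matrix.IsHermitian.eigenvectorUnitary hK).2
  have hVsV : Vᴴ * V = 1 := by
    simpa [star_eq_conjTranspose] using Matrix.mem_unitaryGroup_iff'.mp hVU
  have hspec : K = V * Matrix.diagonal (RCLike.ofReal ∘ μ) * Vᴴ := by
    simpa [hV, star_eq_conjTranspose] using hK.spectral_theorem
  set σ : n → ℂ := fun i => if 0 ≤ μ i then 1 else -1 with hσ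
  have hσu : ∀ i, star (σ i) * σ i = 1 := by
    intro i
    by_cases h : 0 ≤ μ i <;> simp [hσ, h]
  refine ⟨V * Matrix.diagonal σ * Vᴴ, ?_, ?_⟩
  · have h1 := diagonal_sign_unitary σ hσu
    have h2 : Vᴴ ∈ Matrix.unitaryGroup n ℂ := by
      rw [← star_eq_conjTranspose]
      exact Unitary.star_mem hVU
    exact mul_mem (mul_mem hVU h1) h2
  · have : (V * Matrix.diagonal σ * Vᴴ) * K
        = V * (Matrix.diagonal σ * Matrix.diagonal (RCLike.ofReal ∘ μ)) * Vᴴ := by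
      conv_lhs => rw [hspec]
      exact conj_mul_conj hVsV
    rw [this, Matrix.diagonal_mul_diagonal, Matrix.trace_mul_cycle, hVsV, Matrix.one_mul,
      Matrix.trace_diagonal]
    rw [Complex.re_sum]
    refine Finset.sum_congr rfl fun i _ => ?_
    by_cases h : 0 ≤ μ i
    · simp [hσ, h, Function.comp, abs_of_nonneg h]
    · simp only [hσ, h, if_false, Function.comp_apply]
      rw [abs_of_neg (not_le.mp h)]
      simp

end herm

lemma psd_diag_re_nonneg {M : Matrix n n ℂ} (hM : M.PosSemidef) (i : n) :
    0 ≤ (M i i).re := by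
  set e : n → ℂ := fun j => if j = i then 1 else 0 with he
  have h := hM.dotProduct_mulVec_nonneg e
  have : star e ⬝ᵥ (M *ᵥ e) = M i i := by
    simp [he, dotProduct, Matrix.mulVec, apply_ite, Finset.sum_ite_eq', Finset.sum_ite_eq]
  rw [this] at h
  exact (RCLike.nonneg_iff.mp h).1

lemma psd_trace_re_nonneg {M : Matrix n n ℂ} (hM : M.PosSemidef) : 0 ≤ (M.trace).re := by
  rw [Matrix.trace, Complex.re_sum]
  exact Finset.sum_nonneg fun i _ => psd_diag_re_nonneg hM i

/-- The square root of the fidelity equals the trace norm of `√ρ₂ √ρ₁`. -/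
lemma sqrt_fidelity_eq {R S : Matrix n n ℂ} (hR : R.PosSemidef) (hS : S.PosSemidef) :
    Real.sqrt (fidelity R S) = traceNorm (msqrt S * msqrt R) := by
  set A := msqrt R with hA
  set B := msqrt S with hB
  have hAh : Aᴴ = A := (msqrt_posSemidef hR).1.eq
  have hBh : Bᴴ = B := (msqrt_posSemidef hS).1.eq
  have key : (B * A)ᴴ * (B * A) = A * S * A := by
    rw [Matrix.conjTranspose_mul, hAh, hBh, Matrix.mul_assoc, ← Matrix.mul_assoc B B A,
      msqrt_mul_self hS, ← Matrix.mul_assoc]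
  have h1 : traceNorm (B * A) = ((msqrt (A * S * A)).trace).re := by
    rw [traceNorm, key]
  rw [fidelity, ← hA, h1]
  have hpsd : (A * S * A).PosSemidef := by
    rw [← key]; exact Matrix.posSemidef_conjTranspose_mul_self _
  have hnn : 0 ≤ ((msqrt (A * S * A)).trace).re := psd_trace_re_nonneg (msqrt_posSemidef hpsd)
  rw [Real.sqrt_sq hnn]

/-- fidelity is `c²` with `c = traceNorm (√ρ₂ √ρ₁) ≥ 0`. -/
lemma fidelity_eq_sq {R S : Matrix n n ℂ} (hR : R.PosSemidef) (hS : S.PosSemidef) :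
    fidelity R S = (traceNorm (msqrt S * msqrt R)) ^ 2 := by
  have h := sqrt_fidelity_eq hR hS
  have h0 : 0 ≤ fidelity R S := sq_nonneg _
  nlinarith [Real.sq_sqrt h0, Real.sqrt_nonneg (fidelity R S)]


lemma trace_sandwich_diag (V M : Matrix n n ℂ) (σ : n → ℂ) :
    ((V * Matrix.diagonal σ * Vᴴ) * M).trace = ∑ i, σ i * (Vᴴ * M * V) i i := by
  have h1 : (V * Matrix.diagonal σ * Vᴴ) * M = (V * Matrix.diagonal σ) * (Vᴴ * M) := by
    rw [Matrix.mul_assoc]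
  rw [h1, Matrix.trace_mul_comm, ← Matrix.mul_assoc, trace_mul_diagonal']

/-- Lower bound: `1 - √F ≤ (1/2) ‖ρ₁ - ρ₂‖₁`. -/
theorem fvdg_lower {R S : Matrix n n ℂ} (hR : IsDensityMatrix R) (hS : IsDensityMatrix S) :
    1 - Real.sqrt (fidelity R S) ≤ (1 / 2) * traceNorm (R - S) := by
  obtain ⟨hRp, hRt⟩ := hR
  obtain ⟨hSp, hSt⟩ := hS
  set A := msqrt R with hA
  set B := msqrt S with hB
  have hAp : A.PosSemidef := msqrt_posSemidef hRp
  have hBp : B.PosSemidef := msqrt_posSemidef hSp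
  have hAA : A * A = R := msqrt_mul_self hRp
  have hBB : B * B = S := msqrt_mul_self hSp
  set G : Matrix n n ℂ := A - B with hGdef
  have hG : G.IsHermitian := hAp.1.sub hBp.1
  set V : Matrix n n ℂ := (Matrix.IsHermitian.eigenvectorUnitary hG : Matrix n n ℂ) with hV
  set lam : n → ℝ := hG.eigenvalues with hlam
  have hVU : V ∈ Matrix.unitaryGroup n ℂ := (Matrix.IsHermitian.eigenvectorUnitary hG).2
  have hVsV : Vᴴ * V = 1 := by
    simpa [star_eq_conjTranspose] using Matrix.mem_unitaryGroup_iff'.mp hVU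
  set D : Matrix n n ℂ := Matrix.diagonal (fun i => ((lam i : ℝ) : ℂ)) with hD
  have hspec : G = V * D * Vᴴ := by
    have h0 : G = V * Matrix.diagonal (RCLike.ofReal ∘ lam) * Vᴴ := by
      simpa [hV, star_eq_conjTranspose] using hG.spectral_theorem
    rw [h0]
    rfl
  set N : Matrix n n ℂ := Vᴴ * (A + B) * V with hN
  have hVG : Vᴴ * G = D * Vᴴ := by
    rw [hspec]
    calc Vᴴ * (V * D * Vᴴ) = (Vᴴ * V) * (D * Vᴴ) := by simp only [Matrix.mul_assoc]
      _ = D * Vᴴ := by rw [hVsV, Matrix.one_mul]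
  have hGV : G * V = V * D := by
    rw [hspec]
    calc V * D * Vᴴ * V = V * (D * (Vᴴ * V)) := by simp only [Matrix.mul_assoc]
      _ = V * D := by rw [hVsV, Matrix.mul_one]
  have hVGV : Vᴴ * G * V = D := by
    rw [Matrix.mul_assoc, hGV, ← Matrix.mul_assoc, hVsV, Matrix.one_mul]
  have hNre : ∀ i, |lam i| ≤ (N i i).re := by
    intro i
    have h2A : (Vᴴ * (A + B + G) * V).PosSemidef := by
      have heq : A + B + G = A + A := by rw [hGdef]; abel
      rw [heq]
      exact (hAp.add hAp).conjTranspose_mul_mul_same V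
    have h2B : (Vᴴ * (A + B - G) * V).PosSemidef := by
      have heq : A + B - G = B + B := by rw [hGdef]; abel
      rw [heq]
      exact (hBp.add hBp).conjTranspose_mul_mul_same V
    have hplus : 0 ≤ (N i i).re + lam i := by
      have h := psd_diag_re_nonneg h2A i
      have hsplit : Vᴴ * (A + B + G) * V = N + D := by
        rw [hN, ← hVGV, Matrix.mul_add, Matrix.add_mul]
      rw [hsplit] at h
      simpa [hD, Matrix.diagonal_apply_eq, Complex.add_re] using h
    have hminus : 0 ≤ (N i i).re - lam i := by
      have h := psd_diag_re_nonneg h2B i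
      have hsplit : Vᴴ * (A + B - G) * V = N - D := by
        rw [hN, ← hVGV, Matrix.mul_sub, Matrix.sub_mul]
      rw [hsplit] at h
      simpa [hD, Matrix.diagonal_apply_eq, Complex.sub_re] using h
    rcases abs_cases (lam i) with h | h
    · rw [h.1]; linarith
    · rw [h.1]; linarith
  set σ : n → ℂ := fun i => if 0 ≤ lam i then 1 else -1 with hσ
  have hσu : ∀ i, star (σ i) * σ i = 1 := by
    intro i; by_cases h : 0 ≤ lam i <;> simp [hσ, h]
  set W : Matrix n n ℂ := V * Matrix.diagonal σ * Vᴴ with hW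
  have hWU : W ∈ Matrix.unitaryGroup n ℂ := by
    have h2 : Vᴴ ∈ Matrix.unitaryGroup n ℂ := by
      rw [← star_eq_conjTranspose]; exact Unitary.star_mem hVU
    exact mul_mem (mul_mem hVU (diagonal_sign_unitary σ hσu)) h2
  -- identity R - S = ½ (G (A+B) + (A+B) G)
  have hRS : R - S = (2:ℂ)⁻¹ • (G * (A + B) + (A + B) * G) := by
    rw [hGdef, ← hAA, ← hBB]
    ext i j
    simp only [Matrix.sub_apply, Matrix.smul_apply, Matrix.add_apply, Matrix.sub_mul,
      Matrix.mul_sub, Matrix.mul_add, Matrix.add_mul, smul_eq_mul]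
    ring
  -- diagonal entries of Vᴴ (R−S) V
  have hdiagRS : ∀ i, (Vᴴ * (R - S) * V) i i = (lam i : ℂ) * N i i := by
    intro i
    have h1 : Vᴴ * (R - S) * V = (2:ℂ)⁻¹ • (D * N + N * D) := by
      rw [hRS]
      have hGAB : Vᴴ * (G * (A + B)) * V = D * N := by
        rw [hN]
        calc Vᴴ * (G * (A + B)) * V = (Vᴴ * G) * ((A + B) * V) := by
              simp only [Matrix.mul_assoc]
          _ = D * (Vᴴ * ((A + B) * V)) := by rw [hVG]; simp only [Matrix.mul_assoc]
          _ = D * (Vᴴ * (A + B) * V) := by simp only [Matrix.mul_assoc]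
      have hABG : Vᴴ * ((A + B) * G) * V = N * D := by
        rw [hN]
        calc Vᴴ * ((A + B) * G) * V = (Vᴴ * (A + B)) * (G * V) := by
              simp only [Matrix.mul_assoc]
          _ = (Vᴴ * (A + B)) * (V * D) := by rw [hGV]
          _ = (Vᴴ * (A + B) * V) * D := by simp only [Matrix.mul_assoc]
      rw [Matrix.mul_smul, Matrix.smul_mul, Matrix.mul_add, Matrix.add_mul, hGAB, hABG]
    rw [h1]
    simp only [Matrix.smul_apply, Matrix.add_apply, smul_eq_mul]
    rw [Matrix.diagonal_mul, Matrix.mul_diagonal]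
    ring
  -- trace of W (R − S)
  have htrW : ((W * (R - S)).trace).re = ∑ i, |lam i| * (N i i).re := by
    rw [hW, trace_sandwich_diag, Complex.re_sum]
    refine Finset.sum_congr rfl fun i _ => ?_
    rw [hdiagRS i]
    by_cases h : 0 ≤ lam i
    · simp only [hσ, h, if_true, one_mul]
      rw [Complex.re_ofReal_mul, abs_of_nonneg h]
    · simp only [hσ, h, if_false]
      have : (-1 : ℂ) * ((lam i : ℂ) * N i i) = ((-(lam i) : ℝ) : ℂ) * N i i := by
        push_cast; ring
      rw [this, Complex.re_ofReal_mul, abs_of_neg (not_le.mp h)]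
  -- trace of G² = ∑ λ², and equals 2 − 2 Re Tr(A B)
  have htrG2 : ((G * G).trace).re = ∑ i, (lam i)^2 := by
    have h1 : G * G = V * (D * D) * Vᴴ := by
      conv_lhs => rw [hspec]
      exact conj_mul_conj hVsV
    rw [h1, Matrix.trace_mul_cycle, hVsV, Matrix.one_mul, hD, Matrix.diagonal_mul_diagonal,
      Matrix.trace_diagonal, Complex.re_sum]
    refine Finset.sum_congr rfl fun i _ => ?_
    have h2 : (((lam i : ℝ) : ℂ)) * ((lam i : ℝ) : ℂ) = ((lam i ^ 2 : ℝ) : ℂ) := by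
      push_cast; ring
    rw [h2, Complex.ofReal_re]
  have htrG2' : ((G * G).trace).re = 2 - 2 * ((A * B).trace).re := by
    have hexp : G * G = R - A * B - B * A + S := by
      rw [hGdef, ← hAA, ← hBB]
      ext i j
      simp only [Matrix.sub_apply, Matrix.add_apply, Matrix.sub_mul, Matrix.mul_sub]
      ring
    have hBA : (B * A).trace = (A * B).trace := Matrix.trace_mul_comm B A
    rw [hexp]
    rw [Matrix.trace_add, Matrix.trace_sub, Matrix.trace_sub, hRt, hSt, hBA]
    simp only [Complex.add_re, Complex.sub_re, Complex.one_re]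
    ring
  -- Re Tr(A B) ≤ traceNorm (B A) = √F
  have hABle : ((A * B).trace).re ≤ Real.sqrt (fidelity R S) := by
    rw [sqrt_fidelity_eq hRp hSp, ← hA, ← hB]
    have h := re_trace_mul_le_traceNorm (B * A) 1 (one_mem _)
    rw [Matrix.one_mul] at h
    rw [Matrix.trace_mul_comm]
    exact h
  -- chain
  have hchain1 : ∑ i, (lam i)^2 ≤ ∑ i, |lam i| * (N i i).re := by
    refine Finset.sum_le_sum fun i _ => ?_
    have h1 : (lam i)^2 = |lam i| * |lam i| := by rw [abs_mul_abs_self, sq]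
    rw [h1]
    exact mul_le_mul_of_nonneg_left (hNre i) (abs_nonneg _)
  have hfinal : ((G * G).trace).re ≤ traceNorm (R - S) := by
    calc ((G * G).trace).re = ∑ i, (lam i)^2 := htrG2
      _ ≤ ∑ i, |lam i| * (N i i).re := hchain1
      _ = ((W * (R - S)).trace).re := htrW.symm
      _ ≤ traceNorm (R - S) := re_trace_mul_le_traceNorm _ _ hWU
  rw [htrG2'] at hfinal
  linarith

/-- Polar-type result: there is a unitary `W` with `Tr (X W) = Tr √(X Xᴴ)`. -/
theorem exists_unitary_trace_polar (X : Matrix n n ℂ) :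
    ∃ W ∈ Matrix.unitaryGroup n ℂ, (X * W).trace = (msqrt (X * Xᴴ)).trace := by
  have hM : (X * Xᴴ).PosSemidef := Matrix.posSemidef_self_mul_conjTranspose X
  set P : Matrix n n ℂ := msqrt (X * Xᴴ) with hPdef
  have hP : P.PosSemidef := msqrt_posSemidef hM
  have hPP : P * P = X * Xᴴ := msqrt_mul_self hM
  have hH : P.IsHermitian := hP.1
  set V : Matrix n n ℂ := (Matrix.IsHermitian.eigenvectorUnitary hH : Matrix n n ℂ) with hV
  set s : n → ℝ := hH.eigenvalues with hs
  have hs0 : ∀ i, 0 ≤ s i := hP.eigenvalues_nonneg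
  have hVU : V ∈ Matrix.unitaryGroup n ℂ := (Matrix.IsHermitian.eigenvectorUnitary hH).2
  have hVsV : Vᴴ * V = 1 := by
    simpa [star_eq_conjTranspose] using Matrix.mem_unitaryGroup_iff'.mp hVU
  have hVVs : V * Vᴴ = 1 := by
    simpa [star_eq_conjTranspose] using Matrix.mem_unitaryGroup_iff.mp hVU
  set Ds : Matrix n n ℂ := Matrix.diagonal (fun i => ((s i : ℝ) : ℂ)) with hDs
  have hspec : P = V * Ds * Vᴴ := by
    have h0 : P = V * Matrix.diagonal (RCLike.ofReal ∘ s) * Vᴴ := by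
      simpa [hV, star_eq_conjTranspose] using hH.spectral_theorem
    rw [h0]; rfl
  have hVPV : Vᴴ * P * V = Ds := by
    rw [hspec]
    calc Vᴴ * (V * Ds * Vᴴ) * V = (Vᴴ * V) * Ds * (Vᴴ * V) := by simp only [Matrix.mul_assoc]
      _ = Ds := by rw [hVsV, Matrix.one_mul, Matrix.mul_one]
  set Y : Matrix n n ℂ := Vᴴ * X with hY
  have hXVY : X = V * Y := by
    rw [hY, ← Matrix.mul_assoc, hVVs, Matrix.one_mul]
  have hYY : Y * Yᴴ = Matrix.diagonal (fun i => ((s i ^ 2 : ℝ) : ℂ)) := by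
    rw [hY, Matrix.conjTranspose_mul, Matrix.conjTranspose_conjTranspose]
    have h1 : Vᴴ * X * (Xᴴ * V) = Vᴴ * (X * Xᴴ) * V := by simp only [Matrix.mul_assoc]
    rw [h1, ← hPP]
    have h2 : Vᴴ * (P * P) * V = (Vᴴ * P * V) * (Vᴴ * P * V) := by
      calc Vᴴ * (P * P) * V = Vᴴ * P * (V * Vᴴ) * (P * V) := by
            rw [hVVs]; simp only [Matrix.mul_one, Matrix.mul_assoc]
        _ = (Vᴴ * P * V) * (Vᴴ * P * V) := by simp only [Matrix.mul_assoc]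
    rw [h2, hVPV, hDs, Matrix.diagonal_mul_diagonal]
    congr 1
    funext i
    push_cast
    ring
  -- rows with zero singular values vanish
  have hrow0 : ∀ i, s i = 0 → ∀ k, Y i k = 0 := by
    intro i hsi k
    have hdiag : ∑ k, Y i k * star (Y i k) = 0 := by
      have := congrFun (congrFun hYY i) i
      simp only [Matrix.mul_apply, Matrix.conjTranspose_apply, Matrix.diagonal_apply_eq] at this
      rw [this, hsi]
      norm_num
    have hnn : ∀ k, (0:ℝ) ≤ (Y i k * star (Y i k)).re := by
      intro k
      rw [show Y i k * star (Y i k) = (Complex.normSq (Y i k) : ℂ) from by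
        rw [Complex.star_def, Complex.mul_conj]]
      simp [Complex.normSq_nonneg]
    have hsum0 : ∑ k, (Y i k * star (Y i k)).re = 0 := by
      rw [← Complex.re_sum, hdiag]; simp
    have := (Finset.sum_eq_zero_iff_of_nonneg (fun k _ => hnn k)).mp hsum0 k (Finset.mem_univ k)
    have h2 : Complex.normSq (Y i k) = 0 := by
      have h3 : Y i k * star (Y i k) = (Complex.normSq (Y i k) : ℂ) := by
        rw [Complex.star_def, Complex.mul_conj]
      rw [h3] at this
      simpa using this
    exact Complex.normSq_eq_zero.mp h2
  -- the orthonormal family on the support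
  set v : n → EuclideanSpace ℂ n := fun i => WithLp.toLp 2 (fun k => (((s i)⁻¹ : ℝ) : ℂ) * Y i k) with hv
  have hinner : ∀ i j, (inner ℂ (v i) (v j) : ℂ)
      = (((s i)⁻¹ : ℝ) : ℂ) * (((s j)⁻¹ : ℝ) : ℂ) * (Y * Yᴴ) j i := by
    intro i j
    rw [PiLp.inner_apply]
    simp only [RCLike.inner_apply, hv, PiLp.toLp_apply]
    rw [Matrix.mul_apply, Finset.mul_sum]
    refine Finset.sum_congr rfl fun k _ => ?_
    simp only [Matrix.conjTranspose_apply, _root_.map_mul, Complex.star_def, Complex.conj_ofReal]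
    ring
  have horth : Orthonormal ℂ (({i | s i ≠ 0} : Set n).restrict v) := by
    rw [orthonormal_iff_ite]
    rintro ⟨i, hi⟩ ⟨j, hj⟩
    change inner ℂ (v i) (v j) = _
    rw [hinner i j, hYY]
    simp only [Set.mem_setOf_eq] at hi hj
    by_cases hij : i = j
    · subst hij
      rw [Matrix.diagonal_apply_eq, if_pos rfl]
      push_cast
      field_simp
    · have hne : (⟨i, hi⟩ : {i | s i ≠ 0}) ≠ ⟨j, hj⟩ := by
        simp [Subtype.ext_iff, hij]
      rw [if_neg hne, Matrix.diagonal_apply_ne _ (fun h => hij h.symm)]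
      ring
  have hcard : Module.finrank ℂ (EuclideanSpace ℂ n) = Fintype.card n := by
    simp
  obtain ⟨b, hb⟩ := horth.exists_orthonormalBasis_extension_of_card_eq hcard
  set U : Matrix n n ℂ := Matrix.of (fun i k => b i k) with hU
  have hUU : U * Uᴴ = 1 := by
    ext i j
    rw [Matrix.mul_apply]
    simp only [Matrix.conjTranspose_apply, hU, Matrix.of_apply]
    have hbij := (orthonormal_iff_ite.mp b.orthonormal) j i
    rw [PiLp.inner_apply] at hbij
    simp only [RCLike.inner_apply] at hbij
    have : ∑ k, b i k * star (b j k) = star (∑ k, star (b i k) * b j k) := by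
      rw [star_sum]
      refine Finset.sum_congr rfl fun k _ => ?_
      simp [mul_comm]
    rw [this]
    have h2 : ∑ k, star (b i k) * b j k = if i = j then 1 else 0 := by
      have := (orthonormal_iff_ite.mp b.orthonormal) i j
      rw [PiLp.inner_apply] at this
      simpa [RCLike.inner_apply, mul_comm] using this
    rw [h2]
    by_cases hij : i = j <;> simp [hij, Matrix.one_apply]
  have hUmem : U ∈ Matrix.unitaryGroup n ℂ := by
    rw [Matrix.mem_unitaryGroup_iff]
    simpa [star_eq_conjTranspose] using hUU
  -- the unitary W
  refine ⟨Uᴴ * Vᴴ, ?_, ?_⟩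
  · have h1 : Uᴴ ∈ Matrix.unitaryGroup n ℂ := by
      rw [← star_eq_conjTranspose]; exact Unitary.star_mem hUmem
    have h2 : Vᴴ ∈ Matrix.unitaryGroup n ℂ := by
      rw [← star_eq_conjTranspose]; exact Unitary.star_mem hVU
    exact mul_mem h1 h2
  · -- trace computation
    have htr1 : (X * (Uᴴ * Vᴴ)).trace = (Y * Uᴴ).trace := by
      conv_lhs => rw [hXVY]
      rw [show V * Y * (Uᴴ * Vᴴ) = V * (Y * Uᴴ * Vᴴ) from by simp only [Matrix.mul_assoc],
        Matrix.trace_mul_comm, show Y * Uᴴ * Vᴴ * V = Y * Uᴴ * (Vᴴ * V) from by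
          simp only [Matrix.mul_assoc],
        hVsV, Matrix.mul_one]
    have hdiagYU : ∀ i, (Y * Uᴴ) i i = (s i : ℂ) := by
      intro i
      rw [Matrix.mul_apply]
      simp only [Matrix.conjTranspose_apply, hU, Matrix.of_apply]
      by_cases hi : s i ≠ 0
      · have hbi : b i = v i := hb i hi
        rw [hbi]
        simp only [hv]
        have : ∀ k, Y i k * star ((((s i)⁻¹ : ℝ) : ℂ) * Y i k)
            = (((s i)⁻¹ : ℝ) : ℂ) * (Y i k * star (Y i k)) := by
          intro k
          simp only [star_mul', Complex.star_def, Complex.conj_ofReal]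
          ring
        rw [Finset.sum_congr rfl (fun k _ => this k), ← Finset.mul_sum]
        have hYYii : ∑ k, Y i k * star (Y i k) = ((s i ^ 2 : ℝ) : ℂ) := by
          have := congrFun (congrFun hYY i) i
          simp only [Matrix.mul_apply, Matrix.conjTranspose_apply,
            Matrix.diagonal_apply_eq] at this
          exact this
        rw [hYYii]
        push_cast
        field_simp
      · push_neg at hi
        have : ∀ k, Y i k = 0 := hrow0 i hi
        simp [this, hi]
    have htr2 : (Y * Uᴴ).trace = ∑ i, (s i : ℂ) := by
      rw [Matrix.trace]
      exact Finset.sum_congr rfl fun i _ => hdiagYU i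
    have htrP : P.trace = ∑ i, (s i : ℂ) := by
      rw [hspec, Matrix.trace_mul_cycle, hVsV, Matrix.one_mul, hDs, Matrix.trace_diagonal]
    rw [htr1, htr2]
    exact htrP.symm

/-- vectorization of a matrix. -/
def vec {n : Type*} (C : Matrix n n ℂ) : (n × n) → ℂ := fun p => C p.1 p.2

lemma star_vec_dot_vec (C E : Matrix n n ℂ) : star (_root_.vec C) ⬝ᵥ (_root_.vec E) = (Cᴴ * E).trace := by
  simp only [dotProduct, _root_.vec, Pi.star_apply, Matrix.trace, Matrix.diag, Matrix.mul_apply,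
    Matrix.conjTranspose_apply, Fintype.sum_prod_type]
  rw [Finset.sum_comm]

lemma vmv_mul (a b c d : m → ℂ) :
    Matrix.vecMulVec a b * Matrix.vecMulVec c d = (b ⬝ᵥ c) • Matrix.vecMulVec a d := by
  ext i j
  simp only [Matrix.mul_apply, Matrix.vecMulVec_apply, Matrix.smul_apply, dotProduct,
    smul_eq_mul, Finset.sum_mul]
  refine Finset.sum_congr rfl fun k _ => by ring

lemma trace_vmv (x y : m → ℂ) : (Matrix.vecMulVec x y).trace = y ⬝ᵥ x := by
  simp only [Matrix.trace, Matrix.diag, Matrix.vecMulVec_apply, dotProduct]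
  exact Finset.sum_congr rfl fun i _ => mul_comm _ _

lemma vmv_star_hermitian (x : m → ℂ) : (Matrix.vecMulVec x (star x))ᴴ = Matrix.vecMulVec x (star x) := by
  ext i j
  simp only [Matrix.conjTranspose_apply, Matrix.vecMulVec_apply, Pi.star_apply]
  simp [mul_comm]

lemma trace_mul_vmv (M : Matrix m m ℂ) (x y : m → ℂ) :
    (M * Matrix.vecMulVec x (star y)).trace = star y ⬝ᵥ (M *ᵥ x) := by
  simp only [Matrix.trace, Matrix.diag, Matrix.mul_apply, Matrix.vecMulVec_apply,
    dotProduct, Matrix.mulVec, Pi.star_apply, Finset.mul_sum]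
  refine Finset.sum_congr rfl fun a _ => Finset.sum_congr rfl fun b _ => by ring

lemma kron_one_mulVec (Λ C : Matrix n n ℂ) :
    (Λ ⊗ₖ (1 : Matrix n n ℂ)) *ᵥ (_root_.vec C) = _root_.vec (Λ * C) := by
  funext p
  obtain ⟨i, l⟩ := p
  simp only [Matrix.mulVec, dotProduct, _root_.vec, Matrix.kroneckerMap_apply, Matrix.one_apply,
    Fintype.sum_prod_type, Matrix.mul_apply, mul_ite, ite_mul, mul_one, mul_zero, one_mul,
    zero_mul]
  refine Finset.sum_congr rfl fun j _ => ?_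
  simp

lemma trace_kron_vec (Λ C E : Matrix n n ℂ) :
    ((Λ ⊗ₖ (1 : Matrix n n ℂ)) * Matrix.vecMulVec (_root_.vec C) (star (_root_.vec E))).trace
      = (Λ * (C * Eᴴ)).trace := by
  rw [trace_mul_vmv, kron_one_mulVec, star_vec_dot_vec]
  rw [Matrix.trace_mul_comm Eᴴ (Λ * C), Matrix.mul_assoc]

lemma kron_one_unitary {Λ : Matrix n n ℂ} (h : Λ ∈ Matrix.unitaryGroup n ℂ) :
    (Λ ⊗ₖ (1 : Matrix n n ℂ)) ∈ Matrix.unitaryGroup (n × n) ℂ := by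
  rw [Matrix.mem_unitaryGroup_iff']
  have hct : (Λ ⊗ₖ (1 : Matrix n n ℂ))ᴴ = Λᴴ ⊗ₖ (1 : Matrix n n ℂ) := by
    ext ⟨i, l⟩ ⟨j, mm⟩
    simp only [Matrix.conjTranspose_apply, Matrix.kroneckerMap_apply, Matrix.one_apply]
    by_cases hlm : l = mm
    · subst hlm; simp
    · simp [hlm, Ne.symm hlm]
  have h1 : Λᴴ * Λ = 1 := by
    simpa [star_eq_conjTranspose] using Matrix.mem_unitaryGroup_iff'.mp h
  rw [star_eq_conjTranspose, hct, ← Matrix.mul_kronecker_mul, h1, Matrix.one_mul,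
    Matrix.one_kronecker_one]

lemma real_smul_psd {c : ℝ} (hc : 0 ≤ c) {M : Matrix m m ℂ} (hM : M.PosSemidef) :
    (((c : ℂ)) • M).PosSemidef := by
  refine Matrix.PosSemidef.of_dotProduct_mulVec_nonneg ?_ ?_
  · rw [Matrix.IsHermitian, Matrix.conjTranspose_smul, hM.1.eq]
    congr 1
    simp [Complex.star_def, Complex.conj_ofReal]
  · intro x
    rw [Matrix.smul_mulVec, dotProduct_smul]
    have := hM.dotProduct_mulVec_nonneg x
    rw [smul_eq_mul]
    exact mul_nonneg (by exact_mod_cast Complex.zero_le_real.mpr hc) this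

lemma psd_trace_zero {M : Matrix m m ℂ} (hM : M.PosSemidef) (h : (M.trace).re = 0) :
    M = 0 := by
  have hH := hM.1
  set V : Matrix m m ℂ := (Matrix.IsHermitian.eigenvectorUnitary hH : Matrix m m ℂ) with hV
  set μ : m → ℝ := hH.eigenvalues with hμ
  have hVsV : Vᴴ * V = 1 := by
    simpa [star_eq_conjTranspose] using
      Matrix.mem_unitaryGroup_iff'.mp (Matrix.IsHermitian.eigenvectorUnitary hH).2
  set D : Matrix m m ℂ := Matrix.diagonal (fun i => ((μ i : ℝ) : ℂ)) with hD
  have hspec : M = V * D * Vᴴ := by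
    have h0 : M = V * Matrix.diagonal (RCLike.ofReal ∘ μ) * Vᴴ := by
      simpa [hV, star_eq_conjTranspose] using hH.spectral_theorem
    rw [h0]; rfl
  have htr : (M.trace).re = ∑ i, μ i := by
    rw [hspec, Matrix.trace_mul_cycle, hVsV, Matrix.one_mul, hD, Matrix.trace_diagonal,
      Complex.re_sum]
    exact Finset.sum_congr rfl fun i _ => Complex.ofReal_re _
  have hall : ∀ i, μ i = 0 := by
    intro i
    have hnn : ∀ i ∈ Finset.univ, (0:ℝ) ≤ μ i := fun i _ => hM.eigenvalues_nonneg i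
    have := (Finset.sum_eq_zero_iff_of_nonneg hnn).mp (by rw [← htr, h]) i (Finset.mem_univ i)
    exact this
  have hD0 : D = 0 := by
    rw [hD]
    ext i j
    by_cases hij : i = j
    · subst hij; simp [hall i]
    · simp [Matrix.diagonal_apply_ne _ hij]
  rw [hspec, hD0]
  simp

/-- The trace norm of a difference of rank-one projections. -/
lemma traceNorm_diff_outer (u w : m → ℂ) (hu : star u ⬝ᵥ u = 1) (hw : star w ⬝ᵥ w = 1)
    (t : ℝ) (ht : star u ⬝ᵥ w = (t : ℂ)) :
    t^2 ≤ 1 ∧ traceNorm (Matrix.vecMulVec u (star u) - Matrix.vecMulVec w (star w))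
      = 2 * Real.sqrt (1 - t^2) := by
  have hwu : star w ⬝ᵥ u = (t : ℂ) := by
    have h1 : star w ⬝ᵥ u = star (star u ⬝ᵥ w) := by
      simp only [dotProduct, star_sum, Pi.star_apply, star_mul', star_star]
      exact Finset.sum_congr rfl fun i _ => mul_comm _ _
    rw [h1, ht]
    simp [Complex.star_def, Complex.conj_ofReal]
  set Puu := Matrix.vecMulVec u (star u) with hPuu
  set Pww := Matrix.vecMulVec w (star w) with hPww
  set H : Matrix m m ℂ := Puu - Pww with hH
  have hHh : Hᴴ = H := by
    rw [hH, Matrix.conjTranspose_sub, hPuu, hPww, vmv_star_hermitian, vmv_star_hermitian]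
  have hH2 : H * H = Puu + Pww - (t:ℂ) • Matrix.vecMulVec u (star w)
      - (t:ℂ) • Matrix.vecMulVec w (star u) := by
    rw [hH]
    simp only [Matrix.sub_mul, Matrix.mul_sub, hPuu, hPww, vmv_mul, hu, hw, ht, hwu]
    ext i j
    simp only [Matrix.sub_apply, Matrix.add_apply, Matrix.smul_apply, one_smul, smul_eq_mul]
    ring
  have hH3 : H * (H * H) = ((1 - t^2 : ℝ) : ℂ) • H := by
    rw [hH2, hH]
    simp only [Matrix.mul_sub, Matrix.sub_mul, Matrix.mul_add, Matrix.add_mul,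
      Matrix.mul_smul, Matrix.smul_mul, hPuu, hPww, vmv_mul, hu, hw, ht, hwu]
    ext i j
    simp only [Matrix.sub_apply, Matrix.add_apply, Matrix.smul_apply, smul_eq_mul, one_smul]
    push_cast
    ring
  have htrH2 : ((H * H).trace) = ((2 - 2 * t^2 : ℝ) : ℂ) := by
    rw [hH2, Matrix.trace_sub, Matrix.trace_sub, Matrix.trace_add, Matrix.trace_smul,
      Matrix.trace_smul, hPuu, hPww, trace_vmv, trace_vmv, trace_vmv, trace_vmv,
      hu, hw, hwu, ht]
    simp only [smul_eq_mul]
    push_cast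
    ring
  have hH2psd : (H * H).PosSemidef := by
    rw [show H * H = Hᴴ * H from by rw [hHh]]
    exact Matrix.posSemidef_conjTranspose_mul_self H
  have ht2 : t^2 ≤ 1 := by
    have := psd_trace_re_nonneg hH2psd
    rw [htrH2, Complex.ofReal_re] at this
    linarith
  refine ⟨ht2, ?_⟩
  have htn : traceNorm H = ((msqrt (H * H)).trace).re := by
    rw [traceNorm, hHh]
  by_cases hl : 1 - t^2 = 0
  · have h0 : (H * H).trace.re = 0 := by rw [htrH2, Complex.ofReal_re]; linarith
    have hHH0 : H * H = 0 := psd_trace_zero hH2psd h0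
    have hms : msqrt (H * H) = 0 := by
      rw [hHH0]
      exact msqrt_eq_of_sq_eq (Matrix.PosSemidef.zero) (Matrix.PosSemidef.zero)
        (by rw [Matrix.mul_zero])
    rw [htn, hms, Matrix.trace_zero, show (1:ℝ) - t^2 = 0 from hl, Real.sqrt_zero, mul_zero]
    simp
  · have hlpos : 0 < 1 - t^2 := lt_of_le_of_ne (by linarith) (Ne.symm hl)
    set lam : ℝ := Real.sqrt (1 - t^2) with hlam
    have hlam2 : lam^2 = 1 - t^2 := Real.sq_sqrt (le_of_lt hlpos)
    have hlampos : 0 < lam := Real.sqrt_pos.mpr hlpos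
    set Q : Matrix m m ℂ := ((lam⁻¹ : ℝ) : ℂ) • (H * H) with hQ
    have hQpsd : Q.PosSemidef := real_smul_psd (by positivity) hH2psd
    have hQQ : Q * Q = H * H := by
      rw [hQ, Matrix.smul_mul, Matrix.mul_smul, smul_smul]
      have hassoc : (H * H) * (H * H) = H * (H * (H * H)) := by
        simp only [Matrix.mul_assoc]
      rw [hassoc, hH3, Matrix.mul_smul, smul_smul]
      have hln : (lam : ℂ) ≠ 0 := by
        exact_mod_cast hlampos.ne'
      rw [show ((lam⁻¹ : ℝ) : ℂ) * ((lam⁻¹ : ℝ) : ℂ) * (((1 - t^2 : ℝ)) : ℂ) = 1 from by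
        rw [show (1 - t^2 : ℝ) = lam * lam from by rw [← hlam2]; ring]
        push_cast
        field_simp]
      rw [one_smul]
    have hms : msqrt (H * H) = Q := msqrt_eq_of_sq_eq hQpsd hH2psd hQQ
    rw [htn, hms, hQ, Matrix.trace_smul, htrH2, smul_eq_mul, ← Complex.ofReal_mul,
      Complex.ofReal_re]
    rw [show (2:ℝ) - 2*t^2 = 2 * (lam * lam) from by
      rw [show lam * lam = lam^2 from (sq lam).symm, hlam2]; ring]
    field_simp

lemma psd_diag_nonneg {M : Matrix n n ℂ} (hM : M.PosSemidef) (i : n) : 0 ≤ M i i := by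
  set e : n → ℂ := fun j => if j = i then 1 else 0 with he
  have h := hM.dotProduct_mulVec_nonneg e
  have heq : star e ⬝ᵥ (M *ᵥ e) = M i i := by
    simp [he, dotProduct, Matrix.mulVec, apply_ite, Finset.sum_ite_eq', Finset.sum_ite_eq]
  rwa [heq] at h

lemma psd_trace_ofReal {M : Matrix n n ℂ} (hM : M.PosSemidef) :
    M.trace = ((M.trace.re : ℝ) : ℂ) := by
  have him : M.trace.im = 0 := by
    rw [Matrix.trace, Complex.im_sum]
    refine Finset.sum_eq_zero fun i _ => ?_
    have := psd_diag_nonneg hM i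
    exact (RCLike.nonneg_iff.mp this).2
  apply Complex.ext
  · simp
  · simp [him]

/-- Upper bound: `(1/2) ‖ρ₁ - ρ₂‖₁ ≤ √(1 - F)`. -/
theorem fvdg_upper {R S : Matrix n n ℂ} (hR : IsDensityMatrix R) (hS : IsDensityMatrix S) :
    (1 / 2) * traceNorm (R - S) ≤ Real.sqrt (1 - fidelity R S) := by
  obtain ⟨hRp, hRt⟩ := hR
  obtain ⟨hSp, hSt⟩ := hS
  set A := msqrt R with hA
  set B := msqrt S with hB
  have hAp : A.PosSemidef := msqrt_posSemidef hRp
  have hBp : B.PosSemidef := msqrt_posSemidef hSp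
  have hAh : Aᴴ = A := hAp.1.eq
  have hBh : Bᴴ = B := hBp.1.eq
  have hAA : A * A = R := msqrt_mul_self hRp
  have hBB : B * B = S := msqrt_mul_self hSp
  set X : Matrix n n ℂ := A * B with hX
  have hXh : Xᴴ = B * A := by rw [hX, Matrix.conjTranspose_mul, hAh, hBh]
  have hXXh : X * Xᴴ = A * S * A := by
    rw [hXh, hX, ← hBB]
    simp only [Matrix.mul_assoc]
  obtain ⟨W, hWU, hWtr⟩ := exists_unitary_trace_polar X
  have hWWs : W * Wᴴ = 1 := by
    simpa [star_eq_conjTranspose] using Matrix.mem_unitaryGroup_iff.mp hWU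
  set t : ℝ := ((msqrt (A * S * A)).trace).re with htdef
  have hMpsd : (A * S * A).PosSemidef := by
    rw [← hXXh]; exact Matrix.posSemidef_self_mul_conjTranspose X
  have htreal : (msqrt (A * S * A)).trace = (t : ℂ) :=
    psd_trace_ofReal (msqrt_posSemidef hMpsd)
  have hF : fidelity R S = t^2 := by
    rw [fidelity, ← hA, htdef]
  -- the purification vectors
  set u : (n × n) → ℂ := _root_.vec A with hu'
  set w : (n × n) → ℂ := _root_.vec (B * W) with hw'
  have hu : star u ⬝ᵥ u = 1 := by
    rw [hu', star_vec_dot_vec, hAh, hAA, hRt]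
  have hw : star w ⬝ᵥ w = 1 := by
    rw [hw', star_vec_dot_vec, Matrix.conjTranspose_mul, hBh]
    rw [Matrix.trace_mul_comm]
    rw [show B * W * (Wᴴ * B) = B * (W * Wᴴ) * B from by simp only [Matrix.mul_assoc]]
    rw [hWWs, Matrix.mul_one, hBB, hSt]
  have ht : star u ⬝ᵥ w = (t : ℂ) := by
    rw [hu', hw', star_vec_dot_vec, hAh]
    rw [show A * (B * W) = (A * B) * W from by simp only [Matrix.mul_assoc], ← hX, hWtr,
      hXXh, htreal]
  obtain ⟨ht2, htnH⟩ := traceNorm_diff_outer u w hu hw t ht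
  set H : Matrix (n × n) (n × n) ℂ :=
    Matrix.vecMulVec u (star u) - Matrix.vecMulVec w (star w) with hH
  -- monotonicity via the Kronecker unitary
  set K : Matrix n n ℂ := R - S with hK'
  have hK : K.IsHermitian := hRp.1.sub hSp.1
  obtain ⟨Λ, hΛU, hΛtr⟩ := exists_unitary_abs_trace hK
  have htnK : traceNorm K = ((Λ * K).trace).re := by
    rw [traceNorm_hermitian hK, ← hΛtr]
  have hBWBW : (B * W) * (B * W)ᴴ = S := by
    rw [Matrix.conjTranspose_mul, hBh]
    rw [show B * W * (Wᴴ * B) = B * (W * Wᴴ) * B from by simp only [Matrix.mul_assoc],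
      hWWs, Matrix.mul_one, hBB]
  have hkrH : (((Λ ⊗ₖ (1 : Matrix n n ℂ)) * H).trace) = ((Λ * K).trace) := by
    rw [hH, Matrix.mul_sub, Matrix.trace_sub, trace_kron_vec, trace_kron_vec]
    rw [hAh, hAA, hBWBW, hK', Matrix.mul_sub, Matrix.trace_sub]
  have hmono : traceNorm K ≤ traceNorm H := by
    rw [htnK, ← hkrH]
    exact re_trace_mul_le_traceNorm H (Λ ⊗ₖ (1 : Matrix n n ℂ)) (kron_one_unitary hΛU)
  rw [hF]
  have : traceNorm (R - S) ≤ 2 * Real.sqrt (1 - t^2) := by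
    rw [← htnH]; exact hmono
  linarith


end FuchsAux

/-- **Fuchs–van de Graaf inequalities** relating fidelity and trace distance. -/
theorem fuchs_van_de_graaf (d : ℕ) (ρ₁ ρ₂ : Matrix (Fin d) (Fin d) ℂ)
    (h₁ : IsDensityMatrix ρ₁) (h₂ : IsDensityMatrix ρ₂) :
    1 - Real.sqrt (fidelity ρ₁ ρ₂) ≤ (1 / 2) * traceNorm (ρ₁ - ρ₂) ∧
    (1 / 2) * traceNorm (ρ₁ - ρ₂) ≤ Real.sqrt (1 - fidelity ρ₁ ρ₂) :=
  ⟨fvdg_lower h₁ h₂, fvdg_upper h₁ h₂⟩
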